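/- Assume b = 0, a·μ₀ = d, 3·a·k > d³, c₂² − 4·c₁·c₃ ≥ 0 and k/kₛ < (c₂ − √(c₂² − 4·c₁·c₃))/(2·c₃). Then every positive real root ẑ of h satisfies D(ẑ) > 0 and c₃·ẑ⁶ − c₂·ẑ⁴ + c₁·ẑ² + c₀ > 0; in particular there exists ε₀ > 0 such that for all ε ∈ (0, ε₀) one has T(ẑ) > 0, so at the positive fixed point (ẑ, kₛ·ẑ⁴) the Jacobian of f has positive trace and positive determinant (the fixed point is an unstable source). -/

import Mathlib

/-- For `x > 0`, `x < sinh x * cosh x`. -/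
lemma snod_aux_self_lt_sinh_mul_cosh (x : ℝ) (hx : 0 < x) :
    x < Real.sinh x * Real.cosh x := by
  have h2 : 2 * x < Real.sinh (2 * x) := Real.self_lt_sinh_iff.mpr (by linarith)
  rw [Real.sinh_two_mul] at h2
  linarith

/-- For `x > 0`, `sinh x < x * cosh x` (i.e. `tanh x < x`). -/
lemma snod_aux_sinh_lt_mul_cosh (x : ℝ) (hx : 0 < x) :
    Real.sinh x < x * Real.cosh x := by
  have hder : ∀ y : ℝ, HasDerivAt (fun t => t * Real.cosh t - Real.sinh t)
      (y * Real.sinh y) y := by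
    intro y
    have h := ((hasDerivAt_id y).mul (Real.hasDerivAt_cosh y)).sub (Real.hasDerivAt_sinh y)
    refine h.congr_deriv ?_
    simp only [id_eq]
    ring
  have hmono : StrictMonoOn (fun t => t * Real.cosh t - Real.sinh t) (Set.Ici 0) := by
    apply strictMonoOn_of_deriv_pos (convex_Ici 0)
    · exact ((continuous_id.mul Real.continuous_cosh).sub Real.continuous_sinh).continuousOn
    · intro y hy
      rw [interior_Ici, Set.mem_Ioi] at hy
      rw [(hder y).deriv]
      exact mul_pos hy (Real.sinh_pos_iff.mpr hy)
  have h0 := hmono (Set.self_mem_Ici) (Set.mem_Ici.mpr hx.le) hx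
  simpa using h0

/-- For `x > 0`, `3 * x * cosh x < sinh x ^ 3 + 3 * sinh x`. -/
lemma snod_aux_key (x : ℝ) (hx : 0 < x) :
    3 * (x * Real.cosh x) < Real.sinh x ^ 3 + 3 * Real.sinh x := by
  have hder : ∀ y : ℝ, HasDerivAt
      (fun t => Real.sinh t ^ 3 + 3 * Real.sinh t - 3 * (t * Real.cosh t))
      (3 * Real.sinh y * (Real.sinh y * Real.cosh y - y)) y := by
    intro y
    have h := (((Real.hasDerivAt_sinh y).pow 3).add
        ((Real.hasDerivAt_sinh y).const_mul 3)).sub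
        (((hasDerivAt_id y).mul (Real.hasDerivAt_cosh y)).const_mul 3)
    refine h.congr_deriv ?_
    push_cast
    simp only [id_eq]
    ring
  have hmono : StrictMonoOn
      (fun t => Real.sinh t ^ 3 + 3 * Real.sinh t - 3 * (t * Real.cosh t))
      (Set.Ici 0) := by
    apply strictMonoOn_of_deriv_pos (convex_Ici 0)
    · fun_prop
    · intro y hy
      rw [interior_Ici, Set.mem_Ioi] at hy
      rw [(hder y).deriv]
      have h1 : 0 < Real.sinh y := Real.sinh_pos_iff.mpr hy
      have h2 := snod_aux_self_lt_sinh_mul_cosh y hy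
      have : 0 < Real.sinh y * Real.cosh y - y := by linarith
      positivity
  have h0 := hmono (Set.self_mem_Ici) (Set.mem_Ici.mpr hx.le) hx
  simp only [Real.sinh_zero, Real.cosh_zero] at h0
  norm_num at h0
  linarith


section SnodAux

private lemma snod_P_pos (t C : ℝ) (hC : 0 < C) (hsq : C ^ 2 = (t * C) ^ 2 + 1) :
    0 < 1 - t ^ 2 := by nlinarith [hsq, hC, sq_nonneg C]

private lemma snod_Csq (t C : ℝ) (hsq : C ^ 2 = (t * C) ^ 2 + 1) :
    C ^ 2 * (1 - t ^ 2) = 1 := by linear_combination hsq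

private lemma snod_step_key (t ψ C : ℝ) (hC : 0 < C)
    (hsq : C ^ 2 = (t * C) ^ 2 + 1)
    (h : 3 * (ψ * C) < (t * C) ^ 3 + 3 * (t * C)) :
    3 * (ψ - t) * (1 - t ^ 2) < t ^ 3 := by
  have hP : 0 < 1 - t ^ 2 := snod_P_pos t C hC hsq
  have h1 : C ^ 2 * (1 - t ^ 2) = 1 := snod_Csq t C hsq
  have h2 : 3 * (ψ - t) < t ^ 3 * C ^ 2 := by nlinarith [h, hC]
  have h3 := mul_lt_mul_of_pos_right h2 hP
  have h4 : t ^ 3 * C ^ 2 * (1 - t ^ 2) = t ^ 3 := by linear_combination t ^ 3 * h1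
  linarith

private lemma snod_v_pos (w z : ℝ) (hz : 0 < z) (h : 0 < z * w) : 0 < w := by
  nlinarith [h, hz]

private lemma snod_Cfin (a d v P z : ℝ) (hz : 0 < z)
    (h : 3 * (a * z ^ 3 * v) * P < d ^ 3 * z ^ 3) :
    3 * a * v * P < d ^ 3 := by nlinarith [h, pow_pos hz 3]

private lemma snod_D_core (a d k ks z : ℝ) (ha : 0 < a) (hd : 0 < d)
    (hks : 0 < ks) (hz : 0 < z)
    (hP : 0 < 1 - d ^ 2 * z ^ 2) (hv : 0 < k - ks * z ^ 2)
    (hC : 3 * a * (k - ks * z ^ 2) * (1 - d ^ 2 * z ^ 2) < d ^ 3) :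
    0 < d ^ 3 - a * (1 - d ^ 2 * z ^ 2) * (5 * (k - ks * z ^ 2) - 2 * k) := by
  nlinarith [hC, mul_pos (mul_pos ha hP) (mul_pos hks (pow_pos hz 2))]

private lemma snod_Q_pos (c3 c2 c1 s u : ℝ) (hc3 : 0 < c3) (hs0 : 0 ≤ s)
    (hs2 : s ^ 2 = c2 ^ 2 - 4 * c1 * c3) (hzlt : u * (2 * c3) < c2 - s) :
    0 < c3 * u ^ 2 - c2 * u + c1 := by
  nlinarith [hzlt, hs0, hs2, hc3, sq_nonneg (c2 - 2 * c3 * u - s)]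

end SnodAux

set_option maxHeartbeats 800000

/-- Assume `b = 0`, `a·μ₀ = d`, `3·a·k > d³`,
`c₂² − 4·c₁·c₃ ≥ 0` and `k/kₛ < (c₂ − √(c₂² − 4·c₁·c₃))/(2·c₃)`. Then every
positive real root `ẑ` of `h` satisfies `D(ẑ) > 0` and
`c₃·ẑ⁶ − c₂·ẑ⁴ + c₁·ẑ² + c₀ > 0`; in particular there exists `ε₀ > 0` such that
for all `ε ∈ (0, ε₀)` one has `T(ẑ) = c₃·ẑ⁶ − c₂·ẑ⁴ + c₁·ẑ² + c₀ − ε > 0`, so at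
the positive fixed point `(ẑ, kₛ·ẑ⁴)` the Jacobian of `f` has positive trace
`T(ẑ)` and positive determinant `ε·D(ẑ)` (the fixed point is an unstable
source). -/
theorem snod_positive_root_unstable_source
    (a d k ks μ0 : ℝ)
    (ha : 0 < a) (hd : 0 < d) (hk : 0 < k) (hks : 0 < ks) (hμ0 : 0 < μ0)
    (c3 c2 c1 c0 : ℝ)
    (hc3 : c3 = a * d ^ 2 * ks) (hc2 : c2 = 3 * a * d ^ 2 * k + a * ks)
    (hc1 : c1 = 3 * a * k - a * d ^ 2 * μ0) (hc0 : c0 = a * μ0 - d)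
    (D : ℝ → ℝ)
    (hD : D = fun z => -5 * c3 * z ^ 6 + (c2 + 4 * a * ks) * z ^ 4 - c1 * z ^ 2 - c0)
    (hcrit : a * μ0 = d) (hkbig : 3 * a * k > d ^ 3)
    (hdisc : c2 ^ 2 - 4 * c1 * c3 ≥ 0)
    (hkks : k / ks < (c2 - Real.sqrt (c2 ^ 2 - 4 * c1 * c3)) / (2 * c3)) :
    ∀ zhat : ℝ, 0 < zhat →
      -d * zhat + Real.tanh (a * zhat * (-ks * zhat ^ 4 + k * zhat ^ 2 + μ0)) = 0 →
      0 < D zhat ∧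
      0 < c3 * zhat ^ 6 - c2 * zhat ^ 4 + c1 * zhat ^ 2 + c0 ∧
      ∃ ε0 : ℝ, 0 < ε0 ∧ ∀ ε : ℝ, 0 < ε → ε < ε0 →
        0 < c3 * zhat ^ 6 - c2 * zhat ^ 4 + c1 * zhat ^ 2 + c0 - ε ∧
        0 < ε * D zhat := by
  intro z hz heq
  set ψ := a * z * (-ks * z ^ 4 + k * z ^ 2 + μ0) with hψdef
  clear_value ψ
  have htanh : Real.tanh ψ = d * z := by linarith
  have hC : 0 < Real.cosh ψ := Real.cosh_pos ψ
  have hS : Real.sinh ψ = d * z * Real.cosh ψ := by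
    have h := Real.tanh_eq_sinh_div_cosh ψ
    rw [htanh] at h
    field_simp at h
    linarith
  have hdz : 0 < d * z := mul_pos hd hz
  have hSpos : 0 < Real.sinh ψ := by rw [hS]; positivity
  have hψpos : 0 < ψ := Real.sinh_pos_iff.mp hSpos
  have hcoshsq : Real.cosh ψ ^ 2 = (d * z * Real.cosh ψ) ^ 2 + 1 := by
    rw [← hS]; exact Real.cosh_sq ψ
  have hP' : 0 < 1 - (d * z) ^ 2 := snod_P_pos (d * z) (Real.cosh ψ) hC hcoshsq
  have hP : 0 < 1 - d ^ 2 * z ^ 2 := by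
    have h : 1 - (d * z) ^ 2 = 1 - d ^ 2 * z ^ 2 := by ring
    linarith [h ▸ hP']
  -- v = k - ks z² > 0
  have htlt := snod_aux_sinh_lt_mul_cosh ψ hψpos
  rw [hS] at htlt
  have hψgt : d * z < ψ := (mul_lt_mul_iff_of_pos_right hC).mp htlt
  have hid : ψ - d * z = a * z ^ 3 * (k - ks * z ^ 2) := by
    rw [hψdef]; linear_combination z * hcrit
  have hv : 0 < k - ks * z ^ 2 := by
    have h0 : 0 < z * (a * z ^ 2 * (k - ks * z ^ 2)) := by
      have : z * (a * z ^ 2 * (k - ks * z ^ 2)) = ψ - d * z := by rw [hid]; ring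
      rw [this]; linarith
    have h1 := snod_v_pos _ _ hz h0
    have h2 := snod_v_pos _ _ (mul_pos ha (pow_pos hz 2)) (by linarith : (0:ℝ) <
      a * z ^ 2 * (k - ks * z ^ 2))
    exact h2
  -- key inequality: 3 a v P < d³
  have hkey := snod_aux_key ψ hψpos
  rw [hS] at hkey
  have hC3 := snod_step_key (d * z) ψ (Real.cosh ψ) hC hcoshsq hkey
  have hCfin : 3 * a * (k - ks * z ^ 2) * (1 - d ^ 2 * z ^ 2) < d ^ 3 := by
    apply snod_Cfin a d (k - ks * z ^ 2) (1 - d ^ 2 * z ^ 2) z hz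
    calc 3 * (a * z ^ 3 * (k - ks * z ^ 2)) * (1 - d ^ 2 * z ^ 2)
        = 3 * (ψ - d * z) * (1 - (d * z) ^ 2) := by rw [hid]; ring
      _ < (d * z) ^ 3 := hC3
      _ = d ^ 3 * z ^ 3 := by ring
  -- D > 0
  have hc00 : a * μ0 - d = 0 := by linarith [hcrit]
  have hDz : D z = -5 * c3 * z ^ 6 + (c2 + 4 * a * ks) * z ^ 4 - c1 * z ^ 2 - c0 := by
    rw [hD]
  have hDpos : 0 < D z := by
    rw [hDz]
    have hcore := snod_D_core a d k ks z ha hd hks hz hP hv hCfin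
    have hgoal : 0 < z ^ 2 *
        (d ^ 3 - a * (1 - d ^ 2 * z ^ 2) * (5 * (k - ks * z ^ 2) - 2 * k)) :=
      mul_pos (pow_pos hz 2) hcore
    have hidD : -5 * c3 * z ^ 6 + (c2 + 4 * a * ks) * z ^ 4 - c1 * z ^ 2 - c0 -
        z ^ 2 * (d ^ 3 - a * (1 - d ^ 2 * z ^ 2) * (5 * (k - ks * z ^ 2) - 2 * k)) =
        (a * μ0 - d) * (d ^ 2 * z ^ 2 - 1) := by
      rw [hc3, hc2, hc1, hc0]; ring
    rw [hc00] at hidD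
    linarith [hgoal, hidD]
  -- trace polynomial positivity
  have hc3pos : 0 < c3 := by rw [hc3]; positivity
  have hs0 : 0 ≤ Real.sqrt (c2 ^ 2 - 4 * c1 * c3) := Real.sqrt_nonneg _
  have hs2 : Real.sqrt (c2 ^ 2 - 4 * c1 * c3) ^ 2 = c2 ^ 2 - 4 * c1 * c3 :=
    Real.sq_sqrt hdisc
  have h2c3 : 0 < 2 * c3 := by linarith
  have hkks' : k / ks * (2 * c3) < c2 - Real.sqrt (c2 ^ 2 - 4 * c1 * c3) :=
    (lt_div_iff₀ h2c3).mp hkks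
  have hzk : z ^ 2 < k / ks := (lt_div_iff₀ hks).mpr (by linarith [hv])
  have hzlt : z ^ 2 * (2 * c3) < c2 - Real.sqrt (c2 ^ 2 - 4 * c1 * c3) :=
    lt_trans (mul_lt_mul_of_pos_right hzk h2c3) hkks'
  have hQ := snod_Q_pos c3 c2 c1 (Real.sqrt (c2 ^ 2 - 4 * c1 * c3)) (z ^ 2)
    hc3pos hs0 hs2 hzlt
  have hc0z : c0 = 0 := by rw [hc0]; linarith [hcrit]
  have hT0 : 0 < c3 * z ^ 6 - c2 * z ^ 4 + c1 * z ^ 2 + c0 := by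
    have h1 : 0 < z ^ 2 * (c3 * (z ^ 2) ^ 2 - c2 * z ^ 2 + c1) :=
      mul_pos (pow_pos hz 2) hQ
    have h2 : c3 * z ^ 6 - c2 * z ^ 4 + c1 * z ^ 2 + c0 =
        z ^ 2 * (c3 * (z ^ 2) ^ 2 - c2 * z ^ 2 + c1) + c0 := by ring
    rw [h2, hc0z]; linarith
  refine ⟨hDpos, hT0, c3 * z ^ 6 - c2 * z ^ 4 + c1 * z ^ 2 + c0, hT0, ?_⟩
  intro ε hε hε0
  exact ⟨by linarith, mul_pos hε hDpos⟩
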